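/- Let n, m ≥ 2 and let Z = M_{n,m}(ℂ) be the JC*-triple of complex n×m matrices with triple product {a,b,c} = (1/2)(a b* c + c b* a), and let (T, ρ) be a universal enveloping TRO of Z. Then T is TRO-isomorphic neither to M_{n,m}(ℂ) nor to M_{m,n}(ℂ): there is no complex-linear bijection Φ from T onto M_{n,m}(ℂ) (or onto M_{m,n}(ℂ)) satisfying Φ(x y* z) = Φ(x) Φ(y)* Φ(z). -/

import Mathlib

noncomputable section
set_option synthInstance.maxHeartbeats 1000000
set_option maxHeartbeats 1000000

open Matrix

/-- A bundled complex Hilbert space. -/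
structure HilbertC : Type 1 where
  carrier : Type
  [nacg : NormedAddCommGroup carrier]
  [ips : InnerProductSpace ℂ carrier]
  [cs : CompleteSpace carrier]

attribute [instance] HilbertC.nacg HilbertC.ips HilbertC.cs

/-- The algebra `B(H)` of bounded operators on a complex Hilbert space `H`. -/
abbrev BH (H : HilbertC) := H.carrier →L[ℂ] H.carrier

/-- The Jordan triple product `{x,y,z} = (1/2)(x y* z + z y* x)`. -/
def jtp {A : Type*} [NonUnitalRing A] [StarRing A] [Module ℂ A] (x y z : A) : A :=
  (2⁻¹ : ℂ) • (x * star y * z + z * star y * x)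

/-- `Z` is a JC*-triple: a closed complex subspace of `B(H)` closed under the
Jordan triple product. -/
def IsJCTriple {H : HilbertC} (Z : Submodule ℂ (BH H)) : Prop :=
  IsClosed (Z : Set (BH H)) ∧ ∀ x ∈ Z, ∀ y ∈ Z, ∀ z ∈ Z, jtp x y z ∈ Z

/-- `T` is a TRO: a closed complex subspace of `B(H)` with `x y* z ∈ T`. -/
def IsTROsub {H : HilbertC} (T : Submodule ℂ (BH H)) : Prop :=
  IsClosed (T : Set (BH H)) ∧ ∀ x ∈ T, ∀ y ∈ T, ∀ z ∈ T, x * star y * z ∈ T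

/-- The smallest closed complex subspace of `B(H)` containing `S` and closed under
the ternary product `(x,y,z) ↦ x y* z`. -/
def troClosure {H : HilbertC} (S : Set (BH H)) : Submodule ℂ (BH H) :=
  sInf {W : Submodule ℂ (BH H) | IsClosed (W : Set (BH H)) ∧ S ⊆ W ∧
    ∀ x ∈ W, ∀ y ∈ W, ∀ z ∈ W, x * star y * z ∈ W}

/-- A triple homomorphism from a subspace `Z ⊆ B(H)` into `B(K)`. -/
def IsTripleHomB {H K : HilbertC} (Z : Submodule ℂ (BH H)) (φ : ↥Z →L[ℂ] BH K) : Prop :=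
  ∀ x y z w : ↥Z, (w : BH H) = jtp (x : BH H) (y : BH H) (z : BH H) →
    φ w = jtp (φ x) (φ y) (φ z)

/-- A triple homomorphism from a subspace `Z ⊆ B(H)` into a subspace `U ⊆ B(K)`. -/
def IsTripleHomInto {H K : HilbertC} (Z : Submodule ℂ (BH H)) (U : Submodule ℂ (BH K))
    (α : ↥Z →L[ℂ] ↥U) : Prop :=
  ∀ x y z w : ↥Z, (w : BH H) = jtp (x : BH H) (y : BH H) (z : BH H) →
    ((α w : BH K)) = jtp ((α x : BH K)) ((α y : BH K)) ((α z : BH K))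

/-- A TRO-homomorphism between subspaces of operator algebras. -/
def IsTROHom {H K : HilbertC} (T : Submodule ℂ (BH H)) (U : Submodule ℂ (BH K))
    (β : ↥T →L[ℂ] ↥U) : Prop :=
  ∀ x y z w : ↥T, (w : BH H) = (x : BH H) * star (y : BH H) * (z : BH H) →
    ((β w : BH K)) = (β x : BH K) * star ((β y : BH K)) * ((β z : BH K))

/-- `(T, ρ)` is a universal enveloping TRO of `Z`. -/
def IsUnivTRO {H Hh : HilbertC} (Z : Submodule ℂ (BH H)) (T : Submodule ℂ (BH Hh))
    (ρ : ↥Z →L[ℂ] ↥T) : Prop :=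
  IsTROsub T ∧ IsTripleHomInto Z T ρ ∧
  troClosure (Set.range fun z : ↥Z => (ρ z : BH Hh)) = T ∧
  ∀ (K : HilbertC) (U : Submodule ℂ (BH K)), IsTROsub U →
    ∀ α : ↥Z →L[ℂ] ↥U, IsTripleHomInto Z U α →
      ∃ β : ↥T →L[ℂ] ↥U, IsTROHom T U β ∧ ∀ z, β (ρ z) = α z

/-- The Jordan triple product on rectangular matrices. -/
def jtpM {n m : ℕ} (a b c : Matrix (Fin n) (Fin m) ℂ) : Matrix (Fin n) (Fin m) ℂ :=
  (2⁻¹ : ℂ) • (a * bᴴ * c + c * bᴴ * a)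

/-- A triple homomorphism from the JC*-triple `M_{n,m}(ℂ)` into a subspace `U ⊆ B(K)`. -/
def IsTripleHomMat {n m : ℕ} {K : HilbertC} (U : Submodule ℂ (BH K))
    (α : Matrix (Fin n) (Fin m) ℂ →L[ℂ] ↥U) : Prop :=
  ∀ a b c, ((α (jtpM a b c) : BH K)) = jtp ((α a : BH K)) ((α b : BH K)) ((α c : BH K))

/-- `(T, ρ)` is a universal enveloping TRO of the JC*-triple `M_{n,m}(ℂ)`. -/
def IsUnivTROMat {n m : ℕ} {Hh : HilbertC} (T : Submodule ℂ (BH Hh))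
    (ρ : Matrix (Fin n) (Fin m) ℂ →L[ℂ] ↥T) : Prop :=
  IsTROsub T ∧ IsTripleHomMat T ρ ∧
  troClosure (Set.range fun a => (ρ a : BH Hh)) = T ∧
  ∀ (K : HilbertC) (U : Submodule ℂ (BH K)), IsTROsub U →
    ∀ α : Matrix (Fin n) (Fin m) ℂ →L[ℂ] ↥U, IsTripleHomMat U α →
      ∃ β : ↥T →L[ℂ] ↥U, IsTROHom T U β ∧ ∀ a, β (ρ a) = α a

namespace Stmt14Aux

/-- embed an n×m matrix as an (n+m)×(n+m) block matrix -/
def sq {n m : ℕ} (x : Matrix (Fin n) (Fin m) ℂ) : Matrix (Fin (n+m)) (Fin (n+m)) ℂ :=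
  Matrix.reindex finSumFinEquiv finSumFinEquiv (Matrix.fromBlocks 0 x 0 0)

lemma sq_inj {n m : ℕ} : Function.Injective (sq (n := n) (m := m)) := by
  intro x y h
  have h2 := congrArg (fun M =>
    ((Matrix.reindex finSumFinEquiv finSumFinEquiv).symm M).toBlocks₁₂) h
  simpa [sq] using h2

lemma sq_mul {n m : ℕ} (x y z : Matrix (Fin n) (Fin m) ℂ) :
    sq x * (sq y)ᴴ * sq z = sq (x * yᴴ * z) := by
  simp only [sq, Matrix.reindex_apply, Matrix.conjTranspose_submatrix,
    Matrix.fromBlocks_conjTranspose, Matrix.submatrix_mul_equiv,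
    Matrix.fromBlocks_multiply]
  simp [Matrix.mul_assoc]

lemma sq_add {n m : ℕ} (x y : Matrix (Fin n) (Fin m) ℂ) : sq (x + y) = sq x + sq y := by
  have h : Matrix.fromBlocks (0 : Matrix (Fin n) (Fin n) ℂ) (x + y) (0 : Matrix (Fin m) (Fin n) ℂ) (0 : Matrix (Fin m) (Fin m) ℂ)
      = Matrix.fromBlocks 0 x 0 0 + Matrix.fromBlocks 0 y 0 0 := by
    rw [Matrix.fromBlocks_add]; simp
  simp only [sq, Matrix.reindex_apply, h, Matrix.submatrix_add]
  rfl

lemma sq_smul {n m : ℕ} (c : ℂ) (x : Matrix (Fin n) (Fin m) ℂ) : sq (c • x) = c • sq x := by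
  have h : Matrix.fromBlocks (0 : Matrix (Fin n) (Fin n) ℂ) (c • x) (0 : Matrix (Fin m) (Fin n) ℂ) (0 : Matrix (Fin m) (Fin m) ℂ)
      = c • Matrix.fromBlocks 0 x 0 0 := by
    rw [Matrix.fromBlocks_smul]; simp
  simp only [sq, Matrix.reindex_apply, h, Matrix.submatrix_smul]
  rfl


/-- The Hilbert space ℂ^N. -/
def HK (N : ℕ) : HilbertC := ⟨EuclideanSpace ℂ (Fin N)⟩

/-- The embedding of M_{n,m} into B(ℂ^{n+m}). -/
def embL (n m : ℕ) : Matrix (Fin n) (Fin m) ℂ →ₗ[ℂ] BH (HK (n+m)) where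
  toFun x := Matrix.toEuclideanCLM (𝕜 := ℂ) (sq x)
  map_add' x y := by rw [sq_add, map_add]; rfl
  map_smul' c x := by rw [sq_smul, _root_.map_smul]; rfl

lemma embL_inj (n m : ℕ) : Function.Injective (embL n m) := by
  intro x y h
  exact sq_inj ((Matrix.toEuclideanCLM (𝕜 := ℂ)).injective h)

lemma embL_mul (n m : ℕ) (x y z : Matrix (Fin n) (Fin m) ℂ) :
    embL n m x * star (embL n m y) * embL n m z = embL n m (x * yᴴ * z) := by
  show Matrix.toEuclideanCLM (𝕜 := ℂ) (sq x) * star (Matrix.toEuclideanCLM (𝕜 := ℂ) (sq y)) *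
      Matrix.toEuclideanCLM (𝕜 := ℂ) (sq z) = _
  rw [← map_star, ← _root_.map_mul, ← _root_.map_mul, Matrix.star_eq_conjTranspose, sq_mul]
  rfl

/-- The range of the embedding. -/
def Usub (n m : ℕ) : Submodule ℂ (BH (HK (n+m))) := LinearMap.range (embL n m)

instance (n m : ℕ) : FiniteDimensional ℂ ↥(Usub n m) :=
  (embL n m).finiteDimensional_range

lemma Usub_isTRO (n m : ℕ) : IsTROsub (Usub n m) := by
  constructor
  · exact Submodule.closed_of_finiteDimensional _
  · rintro x ⟨a, rfl⟩ y ⟨b, rfl⟩ z ⟨c, rfl⟩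
    exact ⟨a * bᴴ * c, (embL_mul n m a b c).symm⟩

/-- The embedding as a CLM into its range. -/
def αmap (n m : ℕ) : Matrix (Fin n) (Fin m) ℂ →L[ℂ] ↥(Usub n m) :=
  LinearMap.toContinuousLinearMap ((embL n m).rangeRestrict)

@[simp] lemma αmap_coe (n m : ℕ) (a : Matrix (Fin n) (Fin m) ℂ) :
    ((αmap n m a : BH (HK (n+m)))) = embL n m a := rfl

lemma embL_jtp (n m : ℕ) (a b c : Matrix (Fin n) (Fin m) ℂ) :
    embL n m (jtpM a b c) = jtp (embL n m a) (embL n m b) (embL n m c) := by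
  rw [jtp, jtpM, _root_.map_smul, map_add, embL_mul, embL_mul]

lemma αmap_hom (n m : ℕ) : IsTripleHomMat (Usub n m) (αmap n m) := by
  intro a b c
  rw [αmap_coe, αmap_coe, αmap_coe, αmap_coe, embL_jtp]

lemma αmap_inj (n m : ℕ) : Function.Injective (αmap n m) := by
  intro x y h
  apply embL_inj n m
  rw [← αmap_coe, h, αmap_coe]

/-- The transpose embedding of M_{n,m} into B(ℂ^{m+n}). -/
def αTmap (n m : ℕ) : Matrix (Fin n) (Fin m) ℂ →L[ℂ] ↥(Usub m n) :=
  (αmap m n).comp (LinearMap.toContinuousLinearMap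
    ((Matrix.transposeLinearEquiv (Fin n) (Fin m) ℂ ℂ).toLinearMap))

@[simp] lemma αTmap_apply (n m : ℕ) (a : Matrix (Fin n) (Fin m) ℂ) :
    αTmap n m a = αmap m n aᵀ := rfl

lemma jtpM_transpose {n m : ℕ} (a b c : Matrix (Fin n) (Fin m) ℂ) :
    (jtpM a b c)ᵀ = jtpM aᵀ bᵀ cᵀ := by
  have hb : bᴴᵀ = bᵀᴴ := by ext i j; simp
  simp only [jtpM, Matrix.transpose_smul, Matrix.transpose_add, Matrix.transpose_mul, hb,
    Matrix.mul_assoc]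
  rw [add_comm]

lemma αTmap_hom (n m : ℕ) : IsTripleHomMat (Usub m n) (αTmap n m) := by
  intro a b c
  rw [αTmap_apply, αTmap_apply, αTmap_apply, αTmap_apply, jtpM_transpose]
  exact αmap_hom m n aᵀ bᵀ cᵀ

lemma αTmap_inj (n m : ℕ) : Function.Injective (αTmap n m) := by
  intro x y h
  have h2 : αmap m n xᵀ = αmap m n yᵀ := h
  exact Matrix.transpose_injective (αmap_inj m n h2)

/-- Core lemma: the universal TRO of M_{n,m} cannot have dimension n*m. -/
lemma key (n m : ℕ) (hn : 2 ≤ n) (hm : 2 ≤ m) (Hh : HilbertC)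
    (T : Submodule ℂ (BH Hh)) (ρ : Matrix (Fin n) (Fin m) ℂ →L[ℂ] ↥T)
    (hUniv : IsUnivTROMat T ρ) (hfd : FiniteDimensional ℂ ↥T)
    (hrk : Module.finrank ℂ ↥T = n * m) : False := by
  obtain ⟨hT, -, -, huniv⟩ := hUniv
  obtain ⟨β₁, hβ₁, hβ₁ρ⟩ := huniv (HK (n+m)) (Usub n m) (Usub_isTRO n m) (αmap n m) (αmap_hom n m)
  obtain ⟨β₂, hβ₂, hβ₂ρ⟩ := huniv (HK (m+n)) (Usub m n) (Usub_isTRO m n) (αTmap n m) (αTmap_hom n m)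
  have hρinj : Function.Injective ρ := by
    intro x y h
    exact αmap_inj n m (by rw [← hβ₁ρ, ← hβ₁ρ, h])
  have hρsurj : Function.Surjective ρ := by
    have h1 : LinearMap.range (ρ : Matrix (Fin n) (Fin m) ℂ →ₗ[ℂ] ↥T) = ⊤ := by
      apply Submodule.eq_top_of_finrank_eq
      rw [LinearMap.finrank_range_of_inj hρinj, hrk, Module.finrank_matrix]
      simp [Fintype.card_fin]
    intro w
    exact (LinearMap.range_eq_top.mp h1) w
  -- the two standard basis matrices
  have h01 : (⟨0, by omega⟩ : Fin n) ≠ (⟨1, by omega⟩ : Fin n) := by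
    intro h; exact absurd (congrArg Fin.val h) (by simp)
  set i0 : Fin n := ⟨0, by omega⟩
  set i1 : Fin n := ⟨1, by omega⟩
  set j0 : Fin m := ⟨0, by omega⟩
  set a : Matrix (Fin n) (Fin m) ℂ := Matrix.single i0 j0 1 with ha
  set c : Matrix (Fin n) (Fin m) ℂ := Matrix.single i1 j0 1 with hc
  -- the element w = ρa (ρa)* ρc ∈ T
  have hwmem : ((ρ a : BH Hh)) * star ((ρ a : BH Hh)) * ((ρ c : BH Hh)) ∈ T :=
    hT.2 _ (ρ a).2 _ (ρ a).2 _ (ρ c).2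
  set w : ↥T := ⟨_, hwmem⟩ with hw
  obtain ⟨d, hd⟩ := hρsurj w
  -- compute β₁ w two ways
  have e1 : (β₁ w : BH (HK (n+m))) = embL n m (a * aᴴ * c) := by
    rw [hβ₁ (ρ a) (ρ a) (ρ c) w rfl, hβ₁ρ, hβ₁ρ]
    rw [αmap_coe, αmap_coe, embL_mul]
  have e1' : (β₁ w : BH (HK (n+m))) = embL n m d := by
    rw [← hd, hβ₁ρ, αmap_coe]
  have hd1 : d = a * aᴴ * c := embL_inj n m (by rw [← e1', e1])
  -- compute β₂ w two ways
  have e2 : (β₂ w : BH (HK (m+n))) = embL m n (aᵀ * aᵀᴴ * cᵀ) := by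
    rw [hβ₂ (ρ a) (ρ a) (ρ c) w rfl, hβ₂ρ, hβ₂ρ]
    rw [αTmap_apply, αTmap_apply, αmap_coe, αmap_coe, embL_mul]
  have e2' : (β₂ w : BH (HK (m+n))) = embL m n dᵀ := by
    rw [← hd, hβ₂ρ, αTmap_apply, αmap_coe]
  have hd2 : dᵀ = aᵀ * aᵀᴴ * cᵀ := embL_inj m n (by rw [← e2', e2])
  -- hence a aᴴ c = (aᵀ aᵀᴴ cᵀ)ᵀ = c aᴴ a
  have hkey : a * aᴴ * c = c * aᴴ * a := by
    have := congrArg Matrix.transpose hd2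
    rw [Matrix.transpose_transpose] at this
    rw [hd1] at this
    rw [this, Matrix.transpose_mul, Matrix.transpose_mul, Matrix.transpose_transpose,
      Matrix.transpose_transpose]
    rw [show aᵀᴴᵀ = aᴴ by ext i j; simp]
    rw [Matrix.mul_assoc]
  -- but evaluating at (i1, j0) gives 0 = 1
  have hL : (a * aᴴ * c) i1 j0 = 0 := by
    simp [ha, hc, Matrix.mul_apply, Matrix.conjTranspose_apply, Matrix.single, h01,
      Finset.sum_ite_eq, Finset.sum_ite_eq']
  have hR : (c * aᴴ * a) i1 j0 = 1 := by
    simp [ha, hc, Matrix.mul_apply, Matrix.conjTranspose_apply, Matrix.single, h01,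
      Finset.sum_ite_eq, Finset.sum_ite_eq']
  rw [hkey, hR] at hL
  exact one_ne_zero hL

end Stmt14Aux

/-- for `n, m ≥ 2`, the universal enveloping TRO of `M_{n,m}(ℂ)` is
TRO-isomorphic neither to `M_{n,m}(ℂ)` nor to `M_{m,n}(ℂ)`. -/
theorem stmt_14 (n m : ℕ) (hn : 2 ≤ n) (hm : 2 ≤ m) (Hh : HilbertC)
    (T : Submodule ℂ (BH Hh)) (ρ : Matrix (Fin n) (Fin m) ℂ →L[ℂ] ↥T)
    (hUniv : IsUnivTROMat T ρ) :
    (¬ ∃ Φ : ↥T →ₗ[ℂ] Matrix (Fin n) (Fin m) ℂ, Function.Bijective Φ ∧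
        ∀ x y z w : ↥T, (w : BH Hh) = (x : BH Hh) * star (y : BH Hh) * (z : BH Hh) →
          Φ w = Φ x * (Φ y)ᴴ * Φ z) ∧
    (¬ ∃ Φ : ↥T →ₗ[ℂ] Matrix (Fin m) (Fin n) ℂ, Function.Bijective Φ ∧
        ∀ x y z w : ↥T, (w : BH Hh) = (x : BH Hh) * star (y : BH Hh) * (z : BH Hh) →
          Φ w = Φ x * (Φ y)ᴴ * Φ z) := by
  constructor
  · rintro ⟨Φ, hbij, -⟩
    have e := LinearEquiv.ofBijective Φ hbij
    have hfd : FiniteDimensional ℂ ↥T := Module.Finite.equiv e.symm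
    refine Stmt14Aux.key n m hn hm Hh T ρ hUniv hfd ?_
    rw [e.finrank_eq, Module.finrank_matrix]
    simp [Fintype.card_fin]
  · rintro ⟨Φ, hbij, -⟩
    have e := LinearEquiv.ofBijective Φ hbij
    have hfd : FiniteDimensional ℂ ↥T := Module.Finite.equiv e.symm
    refine Stmt14Aux.key n m hn hm Hh T ρ hUniv hfd ?_
    rw [e.finrank_eq, Module.finrank_matrix]
    simp [Fintype.card_fin, Nat.mul_comm]
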